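/- Let a, b, x be real numbers with a < x < b. Then the principal value integral PV ∫_a^b √((t−a)(b−t)) / (t−x) dt, defined as the limit as ε → 0⁺ of ∫_a^{x−ε} √((t−a)(b−t))/(t−x) dt + ∫_{x+ε}^b √((t−a)(b−t))/(t−x) dt, exists and equals π · ((a+b)/2 − x). -/

import Mathlib

noncomputable def Fa (a b x t : ℝ) : ℝ :=
  Real.sqrt ((t - a) * (b - t)) + ((a + b) / 2 - x) * Real.arcsin ((2 * t - a - b) / (b - a))
    - Real.sqrt ((x - a) * (b - x)) *
      (Real.log (((b - x) * (t - a) + (x - a) * (b - t)) / 2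
          + Real.sqrt ((x - a) * (b - x)) * Real.sqrt ((t - a) * (b - t)))
        - Real.log (t - x))

lemma hasDerivAt_Fa (a b x : ℝ) (hax : a < x) (hxb : x < b) {t : ℝ}
    (hat : a < t) (htb : t < b) (htx : t ≠ x) :
    HasDerivAt (Fa a b x) (Real.sqrt ((t - a) * (b - t)) / (t - x)) t := by
  have hba : (0:ℝ) < b - a := by linarith
  have hP : 0 < (t - a) * (b - t) := mul_pos (by linarith) (by linarith)
  have hK : 0 < (x - a) * (b - x) := mul_pos (by linarith) (by linarith)
  have hs0 : 0 < Real.sqrt ((t - a) * (b - t)) := Real.sqrt_pos.2 hP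
  have hk0 : 0 < Real.sqrt ((x - a) * (b - x)) := Real.sqrt_pos.2 hK
  set s := Real.sqrt ((t - a) * (b - t)) with hs
  set k := Real.sqrt ((x - a) * (b - x)) with hk
  have hs2 : s ^ 2 = (t - a) * (b - t) := Real.sq_sqrt hP.le
  have hk2 : k ^ 2 = (x - a) * (b - x) := Real.sq_sqrt hK.le
  have hN : 0 < ((b - x) * (t - a) + (x - a) * (b - t)) / 2 + k * s := by
    nlinarith [mul_pos hk0 hs0, mul_pos (sub_pos.2 hxb) (sub_pos.2 hat),
      mul_pos (sub_pos.2 hax) (sub_pos.2 htb)]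
  have htx' : t - x ≠ 0 := sub_ne_zero.2 htx
  -- derivative of the polynomial inside sqrt
  have hP' : HasDerivAt (fun u : ℝ => (u - a) * (b - u)) (a + b - 2 * t) t := by
    have h := ((hasDerivAt_id t).sub_const a).mul ((hasDerivAt_const t b).sub (hasDerivAt_id t))
    refine h.congr_deriv (Eq.symm ?_); simp only [Pi.sub_apply, id_eq]; ring
  have hS : HasDerivAt (fun u : ℝ => Real.sqrt ((u - a) * (b - u))) ((a + b - 2 * t) / (2 * s)) t := by
    have h := (Real.hasDerivAt_sqrt hP.ne').comp t hP'
    simp only [Function.comp_def] at h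
    refine h.congr_deriv (Eq.symm ?_)
    rw [← hs]
    field_simp
  -- arcsin part
  have hq' : HasDerivAt (fun u : ℝ => (2 * u - a - b) / (b - a)) (2 / (b - a)) t := by
    have h := ((((hasDerivAt_id t).const_mul 2).sub_const a).sub_const b).div_const (b - a)
    refine h.congr_deriv (Eq.symm ?_)
    ring
  have hq1 : (2 * t - a - b) / (b - a) ≠ -1 := by
    intro h; rw [div_eq_iff hba.ne'] at h; linarith
  have hq2 : (2 * t - a - b) / (b - a) ≠ 1 := by
    intro h; rw [div_eq_iff hba.ne'] at h; linarith
  have hsq1q : Real.sqrt (1 - ((2 * t - a - b) / (b - a)) ^ 2) = 2 / (b - a) * s := by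
    have h1 : 1 - ((2 * t - a - b) / (b - a)) ^ 2 = (2 / (b - a)) ^ 2 * ((t - a) * (b - t)) := by
      field_simp; ring
    rw [h1, Real.sqrt_mul (sq_nonneg _), Real.sqrt_sq (by positivity), ← hs]
  have hA : HasDerivAt (fun u : ℝ => Real.arcsin ((2 * u - a - b) / (b - a)))
      (1 / (2 / (b - a) * s) * (2 / (b - a))) t := by
    have h := (Real.hasDerivAt_arcsin hq1 hq2).comp t hq'
    simp only [Function.comp_def] at h
    rw [hsq1q] at h
    exact h
  -- log N part
  have hN' : HasDerivAt (fun u : ℝ => ((b - x) * (u - a) + (x - a) * (b - u)) / 2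
        + k * Real.sqrt ((u - a) * (b - u)))
      (((b - x) - (x - a)) / 2 + k * ((a + b - 2 * t) / (2 * s))) t := by
    have h1 : HasDerivAt (fun u : ℝ => ((b - x) * (u - a) + (x - a) * (b - u)) / 2)
        (((b - x) - (x - a)) / 2) t := by
      have h := ((((hasDerivAt_id t).sub_const a).const_mul (b - x)).add
        (((hasDerivAt_const t b).sub (hasDerivAt_id t)).const_mul (x - a))).div_const 2
      refine h.congr_deriv (Eq.symm ?_)
      ring
    exact h1.add (hS.const_mul k)
  have hLN : HasDerivAt (fun u : ℝ => Real.log (((b - x) * (u - a) + (x - a) * (b - u)) / 2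
        + k * Real.sqrt ((u - a) * (b - u))))
      ((((b - x) * (t - a) + (x - a) * (b - t)) / 2 + k * s)⁻¹ *
        (((b - x) - (x - a)) / 2 + k * ((a + b - 2 * t) / (2 * s)))) t := by
    have h := (Real.hasDerivAt_log hN.ne').comp t hN'
    simp only [Function.comp_def] at h
    exact h
  have hLx : HasDerivAt (fun u : ℝ => Real.log (u - x)) ((t - x)⁻¹) t := by
    have h := (Real.hasDerivAt_log htx').comp t ((hasDerivAt_id t).sub_const x)
    simp only [Function.comp_def] at h
    refine h.congr_deriv (Eq.symm ?_)
    simp [id]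
  have hF := (hS.add (hA.const_mul ((a + b) / 2 - x))).sub ((hLN.sub hLx).const_mul k)
  have heq : Fa a b x = fun u : ℝ =>
      (Real.sqrt ((u - a) * (b - u)) + ((a + b) / 2 - x) * Real.arcsin ((2 * u - a - b) / (b - a)))
      - k * (Real.log (((b - x) * (u - a) + (x - a) * (b - u)) / 2
          + k * Real.sqrt ((u - a) * (b - u))) - Real.log (u - x)) := by
    funext u; simp only [Fa, hk]
  rw [heq]
  refine hF.congr_deriv (Eq.symm ?_)
  have harc : 1 / (2 / (b - a) * s) * (2 / (b - a)) = 1 / s := by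
    field_simp
  rw [harc]
  set N := ((b - x) * (t - a) + (x - a) * (b - t)) / 2 + k * s with hNdef
  have hNne : N ≠ 0 := hN.ne'
  field_simp
  linear_combination (-2*((t - x)*(a + b - t - x) + k*s - s^2)) * hNdef
    + ((b - x)*(t - a) + (x - a)*(b - t) + 2*k*s - 2*k^2) * hs2
    - ((b - x)*(t - a) + (x - a)*(b - t)) * hk2

lemma Npos (a b x t : ℝ) (hax : a < x) (hxb : x < b) (hat : a ≤ t) (htb : t ≤ b) :
    0 < ((b - x) * (t - a) + (x - a) * (b - t)) / 2
      + Real.sqrt ((x - a) * (b - x)) * Real.sqrt ((t - a) * (b - t)) := by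
  have h1 : 0 ≤ Real.sqrt ((x - a) * (b - x)) * Real.sqrt ((t - a) * (b - t)) := by positivity
  rcases eq_or_lt_of_le hat with h | h
  · subst h; nlinarith
  · nlinarith [mul_pos (sub_pos.2 hxb) (sub_pos.2 h), mul_nonneg (sub_pos.2 hax).le (sub_nonneg.2 htb)]

lemma contAt_Fa (a b x t : ℝ) (hax : a < x) (hxb : x < b) (hat : a ≤ t) (htb : t ≤ b)
    (htx : t ≠ x) : ContinuousAt (Fa a b x) t := by
  have hFa : Fa a b x = fun u : ℝ =>
      Real.sqrt ((u - a) * (b - u)) + ((a + b) / 2 - x) * Real.arcsin ((2 * u - a - b) / (b - a))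
        - Real.sqrt ((x - a) * (b - x)) *
          (Real.log (((b - x) * (u - a) + (x - a) * (b - u)) / 2
              + Real.sqrt ((x - a) * (b - x)) * Real.sqrt ((u - a) * (b - u)))
            - Real.log (u - x)) := rfl
  rw [hFa]
  have c1 : ContinuousAt (fun u : ℝ => Real.sqrt ((u - a) * (b - u))) t := by fun_prop
  have c2 : ContinuousAt (fun u : ℝ => Real.arcsin ((2 * u - a - b) / (b - a))) t := by
    apply Real.continuous_arcsin.continuousAt.comp
    fun_prop
  have c3 : ContinuousAt (fun u : ℝ => Real.log (((b - x) * (u - a) + (x - a) * (b - u)) / 2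
      + Real.sqrt ((x - a) * (b - x)) * Real.sqrt ((u - a) * (b - u)))) t := by
    apply ContinuousAt.log
    · fun_prop
    · exact (Npos a b x t hax hxb hat htb).ne'
  have c4 : ContinuousAt (fun u : ℝ => Real.log (u - x)) t := by
    apply ContinuousAt.log
    · fun_prop
    · exact sub_ne_zero.2 htx
  exact (c1.add (c2.const_mul _)).sub ((c3.sub c4).const_mul _)

lemma integral_Fa (a b x c d : ℝ) (hax : a < x) (hxb : x < b) (hac : a ≤ c) (hcd : c ≤ d)
    (hdb : d ≤ b) (hxcd : x ∉ Set.Icc c d) :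
    ∫ t in c..d, Real.sqrt ((t - a) * (b - t)) / (t - x) = Fa a b x d - Fa a b x c := by
  have hne : ∀ t ∈ Set.Icc c d, t ≠ x := fun t ht h => hxcd (h ▸ ht)
  apply intervalIntegral.integral_eq_sub_of_hasDeriv_right_of_le hcd
  · intro t ht
    exact (contAt_Fa a b x t hax hxb (hac.trans ht.1) (ht.2.trans hdb) (hne t ht)).continuousWithinAt
  · intro t ht
    exact (hasDerivAt_Fa a b x hax hxb (lt_of_le_of_lt hac ht.1) (lt_of_lt_of_le ht.2 hdb)
      (hne t ⟨ht.1.le, ht.2.le⟩)).hasDerivWithinAt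
  · apply ContinuousOn.intervalIntegrable
    intro t ht
    rw [Set.uIcc_of_le hcd] at ht
    apply ContinuousAt.continuousWithinAt
    exact ContinuousAt.div (by fun_prop) (by fun_prop) (sub_ne_zero.2 (hne t ht))

lemma Fa_b_sub_Fa_a (a b x : ℝ) (hax : a < x) (hxb : x < b) :
    Fa a b x b - Fa a b x a = Real.pi * ((a + b) / 2 - x) := by
  have hba : (0:ℝ) < b - a := by linarith
  have hbx : (0:ℝ) < b - x := by linarith
  have hxa : (0:ℝ) < x - a := by linarith
  have h2ne : ((b - a) / 2 : ℝ) ≠ 0 := by positivity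
  have e1 : Fa a b x b = ((a + b) / 2 - x) * (Real.pi / 2)
      - Real.sqrt ((x - a) * (b - x)) * Real.log ((b - a) / 2) := by
    unfold Fa
    rw [show (2 * b - a - b) = b - a by ring, div_self hba.ne', Real.arcsin_one,
      show ((b - x) * (b - a) + (x - a) * (b - b)) / 2
          + Real.sqrt ((x - a) * (b - x)) * Real.sqrt ((b - a) * (b - b))
        = (b - x) * ((b - a) / 2) by rw [show ((b-a)*(b-b):ℝ) = 0 by ring, Real.sqrt_zero]; ring,
      Real.log_mul hbx.ne' h2ne,
      show ((b - a) * (b - b) : ℝ) = 0 by ring, Real.sqrt_zero]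
    ring
  have e2 : Fa a b x a = ((a + b) / 2 - x) * (-(Real.pi / 2))
      - Real.sqrt ((x - a) * (b - x)) * Real.log ((b - a) / 2) := by
    unfold Fa
    rw [show (2 * a - a - b) = -(b - a) by ring, neg_div, div_self hba.ne',
      show (-1 : ℝ) = -(1:ℝ) by ring, Real.arcsin_neg, Real.arcsin_one,
      show ((b - x) * (a - a) + (x - a) * (b - a)) / 2
          + Real.sqrt ((x - a) * (b - x)) * Real.sqrt ((a - a) * (b - a))
        = (x - a) * ((b - a) / 2) by rw [show ((a-a)*(b-a):ℝ) = 0 by ring, Real.sqrt_zero]; ring,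
      Real.log_mul hxa.ne' h2ne,
      show ((a - a) * (b - a) : ℝ) = 0 by ring, Real.sqrt_zero,
      show (a - x : ℝ) = -(x - a) by ring, Real.log_neg_eq_log]
    ring
  rw [e1, e2]; ring

lemma tendsto_Fa_gap (a b x : ℝ) (hax : a < x) (hxb : x < b) :
    Filter.Tendsto (fun ε : ℝ => Fa a b x (x - ε) - Fa a b x (x + ε))
      (nhdsWithin 0 (Set.Ioi 0)) (nhds 0) := by
  set k := Real.sqrt ((x - a) * (b - x)) with hk
  set H : ℝ → ℝ := fun ε =>
    (Real.sqrt ((x - ε - a) * (b - (x - ε))) - Real.sqrt ((x + ε - a) * (b - (x + ε))))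
    + ((a + b) / 2 - x) * (Real.arcsin ((2 * (x - ε) - a - b) / (b - a))
        - Real.arcsin ((2 * (x + ε) - a - b) / (b - a)))
    - k * (Real.log (((b - x) * (x - ε - a) + (x - a) * (b - (x - ε))) / 2
          + k * Real.sqrt ((x - ε - a) * (b - (x - ε))))
        - Real.log (((b - x) * (x + ε - a) + (x - a) * (b - (x + ε))) / 2
          + k * Real.sqrt ((x + ε - a) * (b - (x + ε))))) with hH
  have hGH : ∀ ε : ℝ, Fa a b x (x - ε) - Fa a b x (x + ε) = H ε := by
    intro ε
    have h1 : (x - ε - x : ℝ) = -ε := by ring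
    have h2 : (x + ε - x : ℝ) = ε := by ring
    simp only [Fa, hH, ← hk, h1, h2, Real.log_neg_eq_log]
    ring
  have hNpos := Npos a b x x hax hxb hax.le hxb.le
  rw [← hk] at hNpos
  have hN0 : ((b - x) * (x - (0:ℝ) - a) + (x - a) * (b - (x - 0))) / 2
      + k * Real.sqrt ((x - (0:ℝ) - a) * (b - (x - 0))) ≠ 0 := by
    norm_num; exact hNpos.ne'
  have hN0' : ((b - x) * (x + (0:ℝ) - a) + (x - a) * (b - (x + 0))) / 2
      + k * Real.sqrt ((x + (0:ℝ) - a) * (b - (x + 0))) ≠ 0 := by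
    norm_num; exact hNpos.ne'
  have cL1 : ContinuousAt (fun ε : ℝ => ((b - x) * (x - ε - a) + (x - a) * (b - (x - ε))) / 2
      + k * Real.sqrt ((x - ε - a) * (b - (x - ε)))) 0 := by fun_prop
  have cL2 : ContinuousAt (fun ε : ℝ => ((b - x) * (x + ε - a) + (x - a) * (b - (x + ε))) / 2
      + k * Real.sqrt ((x + ε - a) * (b - (x + ε)))) 0 := by fun_prop
  have hcont : ContinuousAt H 0 := by
    rw [hH]
    apply ContinuousAt.sub
    · apply ContinuousAt.add
      · fun_prop
      · apply ContinuousAt.mul continuousAt_const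
        apply ContinuousAt.sub
        · exact Real.continuous_arcsin.continuousAt.comp (by fun_prop)
        · exact Real.continuous_arcsin.continuousAt.comp (by fun_prop)
    · exact ContinuousAt.mul continuousAt_const ((cL1.log hN0).sub (cL2.log hN0'))
  have hH0 : H 0 = 0 := by
    simp only [hH]
    norm_num
  have h := hcont.tendsto
  rw [hH0] at h
  exact Filter.Tendsto.congr (fun ε => (hGH ε).symm) (h.mono_left nhdsWithin_le_nhds)


open intervalIntegral

/-- The principal value integral `PV ∫_a^b √((t-a)(b-t))/(t-x) dt` exists for
`a < x < b` and equals `π ((a+b)/2 - x)`. -/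
theorem principalValue_sqrt_semicircle
    (a b x : ℝ) (hax : a < x) (hxb : x < b) :
    Filter.Tendsto
      (fun ε : ℝ =>
        (∫ t in a..(x - ε), Real.sqrt ((t - a) * (b - t)) / (t - x)) +
          ∫ t in (x + ε)..b, Real.sqrt ((t - a) * (b - t)) / (t - x))
      (nhdsWithin 0 (Set.Ioi 0))
      (nhds (Real.pi * ((a + b) / 2 - x))) := by
  have hd : (0:ℝ) < min (x - a) (b - x) := lt_min (by linarith) (by linarith)
  have hmem : Set.Ioo (0:ℝ) (min (x - a) (b - x)) ∈ nhdsWithin (0:ℝ) (Set.Ioi 0) :=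
    Ioo_mem_nhdsGT hd
  have hev : ∀ᶠ ε in nhdsWithin (0:ℝ) (Set.Ioi 0),
      (Fa a b x b - Fa a b x a) + (Fa a b x (x - ε) - Fa a b x (x + ε)) =
      (∫ t in a..(x - ε), Real.sqrt ((t - a) * (b - t)) / (t - x)) +
        ∫ t in (x + ε)..b, Real.sqrt ((t - a) * (b - t)) / (t - x) := by
    filter_upwards [hmem] with ε hε
    have hε0 : 0 < ε := hε.1
    have hε1 : ε < x - a := lt_of_lt_of_le hε.2 (min_le_left _ _)
    have hε2 : ε < b - x := lt_of_lt_of_le hε.2 (min_le_right _ _)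
    rw [integral_Fa a b x a (x - ε) hax hxb le_rfl (by linarith) (by linarith)
        (fun h => by simp only [Set.mem_Icc] at h; linarith [h.2]),
      integral_Fa a b x (x + ε) b hax hxb (by linarith) (by linarith) le_rfl
        (fun h => by simp only [Set.mem_Icc] at h; linarith [h.1])]
    ring
  have hlim : Filter.Tendsto
      (fun ε : ℝ => (Fa a b x b - Fa a b x a) + (Fa a b x (x - ε) - Fa a b x (x + ε)))
      (nhdsWithin 0 (Set.Ioi 0)) (nhds (Real.pi * ((a + b) / 2 - x))) := by
    have h := Filter.Tendsto.add (tendsto_const_nhds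
        (x := Fa a b x b - Fa a b x a) (f := nhdsWithin (0:ℝ) (Set.Ioi 0)))
      (tendsto_Fa_gap a b x hax hxb)
    have hv : Real.pi * ((a + b) / 2 - x) = (Fa a b x b - Fa a b x a) + 0 := by
      rw [add_zero, Fa_b_sub_Fa_a a b x hax hxb]
    rw [hv]
    exact h
  exact Filter.Tendsto.congr' hev hlim
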